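/- Let K be a finite simplicial complex on [n] with w maximal simplexes and d = 1 + dim K. Then for every s ≥ w, N^s(K) = d(s − w) + N^w(K), where N^s(K) is the maximum over s-tuples of simplexes (J_1, ..., J_s) of ∑_{i=1}^{s}|J_i| − |⋂_{i=1}^{s} J_i|. -/

import Mathlib

open Finset

lemma mem_inf_univ_iff' {ι β : Type*} [Fintype ι] [DecidableEq β]
    [Fintype β] (f : ι → Finset β) (x : β) :
    x ∈ Finset.univ.inf f ↔ ∀ i, x ∈ f i := by
  constructor
  · intro h i
    have hsub : Finset.univ.inf f ⊆ f i := Finset.inf_le (Finset.mem_univ i)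
    exact hsub h
  · intro h
    have : ({x} : Finset β) ≤ Finset.univ.inf f :=
      Finset.le_inf fun i _ => Finset.singleton_subset_iff.2 (h i)
    exact Finset.singleton_subset_iff.1 this

lemma inf_univ_succAbove' {β : Type*} [DecidableEq β] [Fintype β] {m : ℕ}
    (f : Fin (m + 1) → Finset β) (p : Fin (m + 1)) :
    Finset.univ.inf f = f p ⊓ Finset.univ.inf (f ∘ p.succAbove) := by
  rw [Fin.univ_succAbove m p, Finset.inf_cons, Finset.inf_map]
  rfl

lemma key_ineq' {β : Type*} [DecidableEq β] [Fintype β] {m : ℕ}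
    (J M : Fin m → Finset β) (h : ∀ i, J i ⊆ M i) :
    (Finset.univ.inf M).card + ∑ i, (J i).card ≤
      (Finset.univ.inf J).card + ∑ i, (M i).card := by
  have h1 : Finset.univ.inf M \ Finset.univ.inf J ⊆
      Finset.univ.biUnion (fun i => M i \ J i) := by
    intro x hx
    rw [Finset.mem_sdiff, mem_inf_univ_iff', mem_inf_univ_iff'] at hx
    push_neg at hx
    obtain ⟨h1, i, hi⟩ := hx
    exact Finset.mem_biUnion.2 ⟨i, Finset.mem_univ i,
      Finset.mem_sdiff.2 ⟨h1 i, hi⟩⟩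
  have h2 : (Finset.univ.inf M).card ≤
      (Finset.univ.inf J).card + ∑ i, (M i \ J i).card := by
    calc (Finset.univ.inf M).card
        ≤ ((Finset.univ.inf M) \ (Finset.univ.inf J)).card
            + (Finset.univ.inf J).card := Finset.card_le_card_sdiff_add_card
      _ ≤ (Finset.univ.biUnion (fun i => M i \ J i)).card
            + (Finset.univ.inf J).card := by
          exact Nat.add_le_add_right (Finset.card_le_card h1) _
      _ ≤ (∑ i, (M i \ J i).card) + (Finset.univ.inf J).card :=
          Nat.add_le_add_right (Finset.card_biUnion_le) _
      _ = _ := by ring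
  have h3 : ∑ i, (M i \ J i).card + ∑ i, (J i).card = ∑ i, (M i).card := by
    rw [← Finset.sum_add_distrib]
    exact Finset.sum_congr rfl fun i _ =>
      Finset.card_sdiff_add_card_eq_card (h i)
  omega

/-- If `K` is a simplicial complex on `[n]` with exactly `w` maximal simplexes and
`d = 1 + dim K`, then for `s ≥ w`, `N^s(K) = d(s − w) + N^w(K)`. -/
theorem stmt_12 (n w s : ℕ) (K : Finset (Finset (Fin n)))
    (hne : K.Nonempty) (hdc : ∀ A ∈ K, ∀ B ⊆ A, B ∈ K)
    (hw : (K.filter (fun A => ∀ B ∈ K, A ⊆ B → A = B)).card = w)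
    (d : ℕ) (hd : d = K.sup Finset.card)
    (hsw : w ≤ s) (a : ℕ)
    (ha : IsGreatest {k : ℕ | ∃ J : Fin w → Finset (Fin n), (∀ i, J i ∈ K) ∧
      k = (∑ i, (J i).card) - (Finset.univ.inf J).card} a) :
    IsGreatest {k : ℕ | ∃ J : Fin s → Finset (Fin n), (∀ i, J i ∈ K) ∧
      k = (∑ i, (J i).card) - (Finset.univ.inf J).card} (d * (s - w) + a) := by
  -- every simplex is contained in a maximal one
  have cover : ∀ A ∈ K, ∃ M, M ∈ K ∧ A ⊆ M ∧ (∀ B ∈ K, M ⊆ B → M = B) := by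
    intro A hA
    obtain ⟨M, hM, hmax⟩ := Finset.exists_max_image
      (K.filter (fun B => A ⊆ B)) Finset.card
      ⟨A, Finset.mem_filter.2 ⟨hA, Finset.Subset.refl A⟩⟩
    rw [Finset.mem_filter] at hM
    refine ⟨M, hM.1, hM.2, fun B hB hMB => ?_⟩
    have := hmax B (Finset.mem_filter.2 ⟨hB, hM.2.trans hMB⟩)
    exact Finset.eq_of_subset_of_card_le hMB this
  have hw1 : 1 ≤ w := by
    obtain ⟨A, hA⟩ := hne
    obtain ⟨M, hM, _, hmax⟩ := cover A hA
    rw [← hw]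
    exact Finset.card_pos.2 ⟨M, Finset.mem_filter.2 ⟨hM, hmax⟩⟩
  obtain ⟨D, hDK, hDd⟩ := Finset.exists_mem_eq_sup K hne Finset.card
  rw [← hd] at hDd
  obtain ⟨k, rfl⟩ : ∃ k, s = w + k := ⟨s - w, by omega⟩
  have hk : w + k - w = k := by omega
  rw [hk]
  clear hk hsw
  induction k with
  | zero => simpa using ha
  | succ m ih =>
    -- upper bound
    have hub : ∀ v ∈ {k : ℕ | ∃ J : Fin (w + (m+1)) → Finset (Fin n),
        (∀ i, J i ∈ K) ∧
        k = (∑ i, (J i).card) - (Finset.univ.inf J).card}, v ≤ d * (m+1) + a := by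
      rintro v ⟨J, hJ, rfl⟩
      choose M hMK hJM hMmax using fun i => cover (J i) (hJ i)
      have step1 := key_ineq' J M hJM
      have h2 : ∃ i ∈ (Finset.univ : Finset (Fin (w + (m+1)))),
          ∃ j ∈ (Finset.univ : Finset (Fin (w + (m+1)))), i ≠ j ∧ M i = M j := by
        apply Finset.exists_ne_map_eq_of_card_lt_of_maps_to
          (t := K.filter (fun A => ∀ B ∈ K, A ⊆ B → A = B))
        · rw [Finset.card_univ, Fintype.card_fin, hw]; omega
        · exact fun i _ => Finset.mem_filter.2 ⟨hMK i, hMmax i⟩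
      obtain ⟨i, -, j, -, hij, hMij⟩ := h2
      set N : Fin (w + m) → Finset (Fin n) := M ∘ j.succAbove with hN
      have hNK : ∀ i, N i ∈ K := fun i => hMK _
      have hinf : Finset.univ.inf M = Finset.univ.inf N := by
        rw [inf_univ_succAbove' M j, ← hN]
        refine inf_eq_right.2 ?_
        obtain ⟨i', hi'⟩ := Fin.exists_succAbove_eq hij
        calc Finset.univ.inf N ≤ N i' := Finset.inf_le (Finset.mem_univ _)
          _ = M j := by rw [hN]; simp only [Function.comp_apply, hi', hMij]
      have hsum : ∑ i, (M i).card = (M j).card + ∑ i, (N i).card :=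
        Fin.sum_univ_succAbove _ j
      have hMjd : (M j).card ≤ d := hd ▸ Finset.le_sup (hMK j)
      have hNv := ih.2 ⟨N, hNK, rfl⟩
      have i0 : Fin (w + m) := ⟨0, by omega⟩
      have hle : (Finset.univ.inf N).card ≤ ∑ i, (N i).card :=
        le_trans (Finset.card_le_card (Finset.inf_le (Finset.mem_univ i0)))
          (Finset.single_le_sum (f := fun i => (N i).card)
            (fun i _ => Nat.zero_le _) (Finset.mem_univ i0))
      rw [hinf] at step1
      have hda : d * (m + 1) = d * m + d := by ring
      omega
    -- membership
    obtain ⟨J, hJ, hJval⟩ := ih.1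
    set J' : Fin (w + (m + 1)) → Finset (Fin n) := Fin.cons D J with hJ'
    have hJ'K : ∀ i, J' i ∈ K := by
      intro i
      refine Fin.cases ?_ ?_ i
      · simpa [hJ'] using hDK
      · intro i'; simpa [hJ'] using hJ i'
    have hsum : ∑ i, (J' i).card = d + ∑ i, (J i).card := by
      have h := Fin.sum_univ_succ (f := fun i : Fin ((w + m) + 1) => (J' i).card)
      exact h.trans (by simp [hJ', hDd])
    have hinf : Finset.univ.inf J' ≤ Finset.univ.inf J := by
      refine Finset.le_inf fun i _ => ?_
      calc Finset.univ.inf J' ≤ J' i.succ := Finset.inf_le (Finset.mem_univ _)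
        _ = J i := by rw [hJ']; simp
    have i0 : Fin (w + m) := ⟨0, by omega⟩
    have hBle : (Finset.univ.inf J).card ≤ ∑ i, (J i).card :=
      le_trans (Finset.card_le_card (Finset.inf_le (Finset.mem_univ i0)))
        (Finset.single_le_sum (f := fun i => (J i).card)
          (fun i _ => Nat.zero_le _) (Finset.mem_univ i0))
    have hcardinf := Finset.card_le_card hinf
    have hv : d * (m + 1) + a ≤ ∑ i, (J' i).card - (Finset.univ.inf J').card := by
      have hda : d * (m + 1) = d * m + d := by ring
      omega
    have hmem : (∑ i, (J' i).card - (Finset.univ.inf J').card) ∈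
        {k : ℕ | ∃ J : Fin (w + (m+1)) → Finset (Fin n), (∀ i, J i ∈ K) ∧
          k = (∑ i, (J i).card) - (Finset.univ.inf J).card} := ⟨J', hJ'K, rfl⟩
    have heq : ∑ i, (J' i).card - (Finset.univ.inf J').card = d * (m + 1) + a :=
      le_antisymm (hub _ hmem) hv
    exact ⟨heq ▸ hmem, hub⟩
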